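/- Let π be a subset seed of span m over a finite alphabet A with distinguished letter 1 such that 1 ∉ R_π (i.e., π_1 = {1}). Suppose (X,t) is a non-final state of S_π with X ≠ ∅ and ψ*((∅,0), u) = (X,t) for some word u ∈ A*. Then there exists a word u' ∈ A* with |u'| < |u| such that ψ*((∅,0), u') = (X \ {max X}, t). In particular, if (X,t) is reachable then (X \ {max X}, t) is reachable by a strictly shorter word. -/

import Mathlib

/-- The set `R_π` of non-`#` positions of a subset seed `π` of span `m` over an alphabet
with distinguished "match" letter `one`: positions `i ∈ [1..m]` with `π i ≠ {one}`. -/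
def Rpi {A : Type*} [DecidableEq A] (m : ℕ) (one : A) (π : ℕ → Finset A) : Finset ℕ :=
  (Finset.Icc 1 m).filter (fun i => π i ≠ {one})

/-- Transition function `ψ` of the subset seed automaton `S_π`.  States are pairs
`(X, t)` with `X : Finset ℕ` and `t : ℕ`; note that `max (X ∪ {0}) = X.sup id`.
A state is final when `max (X ∪ {0}) + t ≥ m`; final states are fixed.  On a
non-final state `(X, t)`: reading `one` yields `(X, t+1)`; reading `a ≠ one`
yields `(X_U ∪ X_V, 0)` with `X_U = {x ∈ R_π : x ≤ t+1 ∧ a ∈ π x}` and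
`X_V = {x+t+1 : x ∈ X, x+t+1 ≤ m, a ∈ π (x+t+1)}`. -/
def seedStep {A : Type*} [DecidableEq A] (m : ℕ) (one : A) (π : ℕ → Finset A)
    (q : Finset ℕ × ℕ) (a : A) : Finset ℕ × ℕ :=
  if m ≤ q.1.sup id + q.2 then q
  else if a = one then (q.1, q.2 + 1)
  else ((Rpi m one π).filter (fun x => x ≤ q.2 + 1 ∧ a ∈ π x) ∪
        ((q.1.filter (fun x => x + q.2 + 1 ≤ m ∧ a ∈ π (x + q.2 + 1))).image
          (fun x => x + q.2 + 1)), 0)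

/-- The extension `ψ*` of the transition function of `S_π` to words,
reading letters left to right from state `q`. -/
def seedRun {A : Type*} [DecidableEq A] (m : ℕ) (one : A) (π : ℕ → Finset A)
    (q : Finset ℕ × ℕ) : List A → Finset ℕ × ℕ
  | [] => q
  | a :: s => seedRun m one π (seedStep m one π q a) s

section Aux

variable {A : Type*} [DecidableEq A] (m : ℕ) (one : A) (π : ℕ → Finset A)

lemma seedRun_cons (q : Finset ℕ × ℕ) (a : A) (s : List A) :
    seedRun m one π q (a :: s) = seedRun m one π (seedStep m one π q a) s := rfl

lemma seedRun_append (q : Finset ℕ × ℕ) (u v : List A) :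
    seedRun m one π q (u ++ v) = seedRun m one π (seedRun m one π q u) v := by
  induction u generalizing q with
  | nil => rfl
  | cons a s ih => simp only [List.cons_append, seedRun_cons, ih]

lemma seedStep_fst_subset (q : Finset ℕ × ℕ) (hq : q.1 ⊆ Rpi m one π) (a : A) :
    (seedStep m one π q a).1 ⊆ Rpi m one π := by
  unfold seedStep
  split_ifs with h1 h2
  · exact hq
  · exact hq
  · intro x hx
    simp only [Finset.mem_union] at hx
    rcases hx with hx | hx
    · exact (Finset.mem_filter.1 hx).1
    · obtain ⟨y, hy, rfl⟩ := Finset.mem_image.1 hx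
      obtain ⟨hyq, hym, hya⟩ := Finset.mem_filter.1 hy
      simp only [Rpi, Finset.mem_filter, Finset.mem_Icc]
      refine ⟨⟨by omega, hym⟩, fun hc => h2 ?_⟩
      rw [hc, Finset.mem_singleton] at hya
      exact hya

lemma seedRun_fst_subset (u : List A) : ∀ q : Finset ℕ × ℕ, q.1 ⊆ Rpi m one π →
    (seedRun m one π q u).1 ⊆ Rpi m one π := by
  induction u with
  | nil => intro q hq; exact hq
  | cons a s ih => intro q hq; exact ih _ (seedStep_fst_subset m one π q hq a)

lemma seedRun_final (q : Finset ℕ × ℕ) (h : m ≤ q.1.sup id + q.2) (u : List A) :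
    seedRun m one π q u = q := by
  induction u with
  | nil => rfl
  | cons a s ih => rw [seedRun_cons, seedStep, if_pos h]; exact ih

lemma seedStep_snd_le (q : Finset ℕ × ℕ) (a : A) :
    (seedStep m one π q a).2 ≤ q.2 + 1 := by
  unfold seedStep
  split_ifs <;> simp

lemma seedRun_snd_le (u : List A) : ∀ q : Finset ℕ × ℕ,
    (seedRun m one π q u).2 ≤ q.2 + u.length := by
  induction u with
  | nil => intro q; simp [seedRun]
  | cons a s ih =>
    intro q
    rw [seedRun_cons]
    have h1 := ih (seedStep m one π q a)
    have h2 := seedStep_snd_le m one π q a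
    simp only [List.length_cons]
    omega

lemma seedRun_ones (k : ℕ) : ∀ (X : Finset ℕ) (j : ℕ), X.sup id + j + k < m →
    seedRun m one π (X, j) (List.replicate k one) = (X, j + k) := by
  induction k with
  | zero => intro X j h; rfl
  | succ k ih =>
    intro X j h
    rw [List.replicate_succ, seedRun_cons]
    have hst : seedStep m one π (X, j) one = (X, j + 1) := by
      rw [seedStep, if_neg (show ¬ m ≤ X.sup id + j by omega), if_pos rfl]
    rw [hst, ih X (j + 1) (by omega)]
    congr 1
    omega

lemma seedRun_ones_fst (k : ℕ) : ∀ (X : Finset ℕ) (j : ℕ),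
    (seedRun m one π (X, j) (List.replicate k one)).1 = X := by
  induction k with
  | zero => intro X j; rfl
  | succ k ih =>
    intro X j
    rw [List.replicate_succ, seedRun_cons]
    unfold seedStep
    split_ifs with h1 h2
    · exact ih X j
    · exact ih X (j + 1)
    · exact absurd rfl h2

lemma seedRun_ones_snd (k : ℕ) : ∀ (j : ℕ) (X : Finset ℕ) (t : ℕ),
    seedRun m one π (X, j) (List.replicate k one) = (X, t) →
    X.sup id + t < m → t = j + k := by
  induction k with
  | zero =>
    intro j X t h _
    have := congrArg Prod.snd h
    simpa [seedRun] using this.symm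
  | succ k ih =>
    intro j X t h hnf
    rw [List.replicate_succ, seedRun_cons] at h
    by_cases hf : m ≤ X.sup id + j
    · rw [seedStep, if_pos hf, seedRun_final m one π (X, j) hf] at h
      have := congrArg Prod.snd h
      simp only at this
      omega
    · rw [seedStep, if_neg hf, if_pos rfl] at h
      have := ih (j + 1) X t h hnf
      omega

lemma list_decomp (u : List A) : (∃ k, u = List.replicate k one) ∨
    ∃ v a k, a ≠ one ∧ u = v ++ a :: List.replicate k one := by
  induction u using List.reverseRecOn with
  | nil => exact Or.inl ⟨0, rfl⟩
  | append_singleton w b ih =>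
    by_cases hb : b = one
    · subst hb
      rcases ih with ⟨k, rfl⟩ | ⟨v, a, k, ha, rfl⟩
      · exact Or.inl ⟨k + 1, by rw [List.replicate_succ']⟩
      · exact Or.inr ⟨v, a, k + 1, ha, by rw [List.replicate_succ']; simp⟩
    · exact Or.inr ⟨w, b, 0, hb, by simp⟩

lemma seed_main_aux (h1 : 1 ∉ Rpi m one π) :
    ∀ (n : ℕ) (u : List A), u.length ≤ n → ∀ (X : Finset ℕ) (t : ℕ) (hne : X.Nonempty),
      X.sup id + t < m → seedRun m one π (∅, 0) u = (X, t) →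
      ∃ u' : List A, u'.length < u.length ∧
        seedRun m one π (∅, 0) u' = (X.erase (X.max' hne), t) := by
  intro n
  induction n with
  | zero =>
    intro u hu X t hne hnf hrun
    rw [List.length_eq_zero_iff.1 (Nat.le_zero.1 hu)] at hrun
    have h0 : (∅ : Finset ℕ) = (X, t).1 := congrArg Prod.fst hrun
    exact absurd h0.symm hne.ne_empty
  | succ n ih =>
    intro u hu X t hne hnf hrun
    rcases list_decomp one u with ⟨k, rfl⟩ | ⟨v, a, k, ha, rfl⟩
    · -- all ones : X = ∅, contradiction
      have h0 := seedRun_ones_fst m one π k ∅ 0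
      rw [hrun] at h0
      exact absurd (show X = ∅ from h0) hne.ne_empty
    · -- u = v ++ a :: one^k
      rcases hv : seedRun m one π (∅, 0) v with ⟨Y, s⟩
      rw [seedRun_append, hv, seedRun_cons] at hrun
      -- (Y, s) is non-final
      have hYs : Y.sup id + s < m := by
        by_contra hf
        push_neg at hf
        rw [seedStep, if_pos hf, seedRun_final m one π (Y, s) hf] at hrun
        have h1' := congrArg Prod.fst hrun
        have h2' := congrArg Prod.snd hrun
        simp only at h1' h2'
        rw [h1', h2'] at hf
        omega
      set XU : Finset ℕ := (Rpi m one π).filter (fun x => x ≤ s + 1 ∧ a ∈ π x) with hXU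
      set Yf : Finset ℕ := Y.filter (fun x => x + s + 1 ≤ m ∧ a ∈ π (x + s + 1)) with hYf
      have hstep : seedStep m one π (Y, s) a = (XU ∪ Yf.image (fun x => x + s + 1), 0) := by
        rw [seedStep, if_neg (show ¬ m ≤ Y.sup id + s by omega), if_neg ha]
      rw [hstep] at hrun
      -- identify X and t
      have hXeq : X = XU ∪ Yf.image (fun x => x + s + 1) := by
        have := seedRun_ones_fst m one π k (XU ∪ Yf.image (fun x => x + s + 1)) 0
        rw [hrun] at this
        exact this
      have hkt : t = k := by
        rw [← hXeq] at hrun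
        have := seedRun_ones_snd m one π k 0 X t hrun hnf
        omega
      have hsv : s ≤ v.length := by
        have := seedRun_snd_le m one π v (∅, 0)
        rw [hv] at this
        simpa using this
      by_cases hYfe : Yf = ∅
      · -- Case A : X = XU
        have hX : X = XU := by rw [hXeq, hYfe]; simp
        set M := X.max' hne with hM
        have hMX : M ∈ X := X.max'_mem hne
        have hMX' := hMX
        rw [hX, hXU, Finset.mem_filter] at hMX'
        obtain ⟨hMR, hMs, hMa⟩ := hMX'
        have hM1 : 1 ≤ M ∧ M ≤ m := by
          have := (Finset.mem_filter.1 hMR).1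
          exact Finset.mem_Icc.1 this
        have hM2 : 2 ≤ M := by
          rcases Nat.lt_or_ge M 2 with h | h
          · interval_cases M
            · omega
            · exact absurd hMR h1
          · exact h
        refine ⟨List.replicate (M - 2) one ++ a :: List.replicate t one, ?_, ?_⟩
        · simp only [List.length_append, List.length_cons, List.length_replicate]
          omega
        · rw [seedRun_append,
            seedRun_ones m one π (M - 2) ∅ 0 (by simp; omega), seedRun_cons]
          have hstep2 : seedStep m one π (∅, 0 + (M - 2)) a = (X.erase M, 0) := by
            rw [seedStep, if_neg (show ¬ m ≤ (∅ : Finset ℕ).sup id + (0 + (M - 2)) by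
              simp; omega), if_neg ha]
            congr 1
            · ext x
              simp only [Finset.filter_empty, Finset.image_empty, Finset.union_empty,
                Finset.mem_filter, Finset.mem_erase]
              constructor
              · rintro ⟨hx1, hx2, hx3⟩
                refine ⟨by omega, ?_⟩
                rw [hX, hXU, Finset.mem_filter]
                exact ⟨hx1, by omega, hx3⟩
              · rintro ⟨hxne, hxX⟩
                have hxM : x ≤ M := Finset.le_max' X x hxX
                rw [hX, hXU, Finset.mem_filter] at hxX
                exact ⟨hxX.1, by omega, hxX.2.2⟩
          rw [hstep2]
          have hsup : (X.erase M).sup id ≤ X.sup id :=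
            Finset.sup_mono (Finset.erase_subset M X)
          rw [seedRun_ones m one π t (X.erase M) 0 (by omega), Nat.zero_add]
      · -- Case B : Yf ≠ ∅
        have hYne : Y.Nonempty := by
          obtain ⟨y, hy⟩ := Finset.nonempty_iff_ne_empty.2 hYfe
          exact ⟨y, (Finset.mem_filter.1 hy).1⟩
        have hYR : Y ⊆ Rpi m one π := by
          have := seedRun_fst_subset m one π v (∅, 0) (by simp)
          rwa [hv] at this
        set N := Y.max' hYne with hN
        have hNY : N ∈ Y := Y.max'_mem hYne
        have hvlen : v.length ≤ n := by
          simp only [List.length_append, List.length_cons, List.length_replicate] at hu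
          omega
        obtain ⟨v', hv'len, hv'run⟩ := ih v hvlen Y s hYne hYs hv
        -- step from (Y.erase N, s) on a
        have hsup' : (Y.erase N).sup id ≤ Y.sup id := Finset.sup_mono (Finset.erase_subset N Y)
        have hNf : (Y.erase N).filter (fun x => x + s + 1 ≤ m ∧ a ∈ π (x + s + 1)) =
            Yf.erase N := by
          rw [hYf, Finset.filter_erase]
        have hstep3 : seedStep m one π (Y.erase N, s) a =
            (XU ∪ (Yf.erase N).image (fun x => x + s + 1), 0) := by
          rw [seedStep, if_neg (show ¬ m ≤ (Y.erase N).sup id + s by omega), if_neg ha]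
          rw [show ((Y.erase N, s) : Finset ℕ × ℕ).2 = s from rfl, hNf]
        by_cases hNYf : N ∈ Yf
        · -- B1: the maximum of Y survives the filter; max X = N + s + 1
          have hN1 : 1 ≤ N := by
            have := (Finset.mem_filter.1 (hYR hNY)).1
            exact (Finset.mem_Icc.1 this).1
          have hMeq : X.max' hne = N + s + 1 := by
            apply le_antisymm
            · apply Finset.max'_le
              intro x hx
              rw [hXeq] at hx
              rcases Finset.mem_union.1 hx with hx | hx
              · have := (Finset.mem_filter.1 hx).2.1
                omega
              · obtain ⟨y, hy, rfl⟩ := Finset.mem_image.1 hx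
                have hyY : y ∈ Y := (Finset.mem_filter.1 hy).1
                have : y ≤ N := Finset.le_max' Y y hyY
                omega
            · apply Finset.le_max'
              rw [hXeq]
              exact Finset.mem_union_right _ (Finset.mem_image_of_mem _ hNYf)
          have hinj : Function.Injective (fun x : ℕ => x + s + 1) := fun x y h => by
            simpa using h
          have hMnotXU : N + s + 1 ∉ XU := by
            intro hc
            have := (Finset.mem_filter.1 hc).2.1
            omega
          have hXerase : X.erase (N + s + 1) = XU ∪ (Yf.erase N).image (fun x => x + s + 1) := by
            rw [hXeq, Finset.erase_union_distrib, Finset.erase_eq_of_notMem hMnotXU,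
              Finset.image_erase hinj]
          refine ⟨v' ++ a :: List.replicate t one, ?_, ?_⟩
          · simp only [List.length_append, List.length_cons, List.length_replicate]
            omega
          · rw [seedRun_append, hv'run, seedRun_cons, hstep3, ← hXerase]
            have hsup2 : (X.erase (N + s + 1)).sup id ≤ X.sup id :=
              Finset.sup_mono (Finset.erase_subset _ X)
            rw [seedRun_ones m one π t (X.erase (N + s + 1)) 0 (by omega), hMeq, Nat.zero_add]
        · -- B2: the maximum of Y is filtered out; (X, t) reachable by shorter word
          have hYfN : Yf.erase N = Yf := Finset.erase_eq_of_notMem hNYf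
          have hrun2 : seedRun m one π (∅, 0) (v' ++ a :: List.replicate t one) = (X, t) := by
            rw [seedRun_append, hv'run, seedRun_cons, hstep3, hYfN, ← hXeq]
            rw [seedRun_ones m one π t X 0 (by omega), Nat.zero_add]
          have hlen2 : (v' ++ a :: List.replicate t one).length ≤ n := by
            simp only [List.length_append, List.length_cons, List.length_replicate] at hu ⊢
            omega
          obtain ⟨u0, hu0len, hu0run⟩ := ih _ hlen2 X t hne hnf hrun2
          refine ⟨u0, lt_trans hu0len ?_, hu0run⟩
          simp only [List.length_append, List.length_cons, List.length_replicate]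
          omega

end Aux

/-- for a subset seed `π` with `1 ∉ R_π` (i.e. `π_1 = {1}`), if a non-final
state `(X,t)` with `X ≠ ∅` is reached from the initial state by a word `u`, then the state
`(X \ {max X}, t)` is reached from the initial state by a strictly shorter word. -/
theorem seedAutomaton_erase_max_reachable_by_shorter_word
    {A : Type*} [DecidableEq A] (m : ℕ) (one : A) (π : ℕ → Finset A)
    (hπ : ∀ i ∈ Finset.Icc 1 m, one ∈ π i)
    (h1 : 1 ∉ Rpi m one π)
    (X : Finset ℕ) (t : ℕ) (hXR : X ⊆ Rpi m one π) (hne : X.Nonempty)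
    (hnf : X.sup id + t < m)
    (u : List A) (hu : seedRun m one π (∅, 0) u = (X, t)) :
    ∃ u' : List A, u'.length < u.length ∧
      seedRun m one π (∅, 0) u' = (X.erase (X.max' hne), t) := by
  exact seed_main_aux m one π h1 u.length u le_rfl X t hne hnf hu
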